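/- For real x ≥ e, the principal branch of the Lambert W function satisfies W₀(x) ≤ ln(x) - ln(ln(x)) + (e/(e-1))·(ln(ln(x))/ln(x)). -/

import Mathlib

open Real

/-- For real `x ≥ e`, the principal branch of the Lambert W function (characterized as the
unique `y ≥ -1` with `y * exp y = x`) satisfies
`W₀(x) ≤ ln x - ln (ln x) + (e/(e-1)) * (ln (ln x) / ln x)`. -/
theorem lambertW_principal_upper_bound (x y : ℝ) (hx : Real.exp 1 ≤ x)
    (hy : -1 ≤ y) (hxy : y * Real.exp y = x) :
    y ≤ Real.log x - Real.log (Real.log x) +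
      (Real.exp 1 / (Real.exp 1 - 1)) * (Real.log (Real.log x) / Real.log x) := by
  have he : (0:ℝ) < Real.exp 1 := Real.exp_pos 1
  have he1 : (2.7:ℝ) < Real.exp 1 := by
    have := Real.exp_one_gt_d9; linarith
  have hx0 : 0 < x := lt_of_lt_of_le he hx
  set L := Real.log x with hL
  have hL1 : 1 ≤ L := by
    rw [hL, ← Real.log_exp 1]
    exact Real.log_le_log he hx
  have hL0 : 0 < L := lt_of_lt_of_le one_pos hL1
  set l := Real.log L with hl
  have hl0 : 0 ≤ l := Real.log_nonneg hL1
  -- l ≤ L / e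
  have hlle : l ≤ L / Real.exp 1 := by
    have h1 : Real.log (L / Real.exp 1) ≤ L / Real.exp 1 - 1 :=
      Real.log_le_sub_one_of_pos (by positivity)
    have h2 : Real.log (L / Real.exp 1) = l - 1 := by
      rw [Real.log_div (by linarith) (ne_of_gt he), Real.log_exp]
    linarith
  set c := Real.exp 1 / (Real.exp 1 - 1) with hc
  set t := l / L with ht
  have ht0 : 0 ≤ t := div_nonneg hl0 hL0.le
  have htl : l = t * L := by rw [ht, div_mul_cancel₀ _ hL0.ne']
  have hte : t ≤ 1 / Real.exp 1 := by
    rw [ht, div_le_div_iff₀ hL0 he]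
    rw [le_div_iff₀ he] at hlle
    linarith
  have hem : (0:ℝ) < Real.exp 1 - 1 := by linarith
  have hc0 : 0 < c := by positivity
  have hct : c * t ≤ c - 1 := by
    have h1 : c * t ≤ c * (1 / Real.exp 1) := by
      exact mul_le_mul_of_nonneg_left hte hc0.le
    have h2 : c * (1 / Real.exp 1) = c - 1 := by
      rw [hc]; field_simp; ring
    linarith
  have ht1 : t ≤ 1 / 2 := by
    have : (1:ℝ) / Real.exp 1 ≤ 1 / 2 := by
      rw [div_le_div_iff₀ he (by norm_num)]; linarith
    linarith
  -- key inequality : 1 ≤ (1 - t) * exp (c * t)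
  have hkey : 1 ≤ (1 - t) * Real.exp (c * t) := by
    have hexp : c * t + 1 ≤ Real.exp (c * t) := Real.add_one_le_exp _
    nlinarith [mul_nonneg ht0 (sub_nonneg.2 hct)]
  set u := L - l + c * t with hu
  have hu1 : (1 - t) * L ≤ u := by
    rw [hu, htl]; nlinarith [mul_nonneg hc0.le ht0]
  have hu0 : 0 < u := by nlinarith
  have hexpu : Real.exp u = x / L * Real.exp (c * t) := by
    rw [hu, sub_add_eq_add_sub, Real.exp_sub, Real.exp_add, Real.exp_log hx0,
      hl, Real.exp_log hL0]
    ring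
  have hxle : x ≤ u * Real.exp u := by
    rw [hexpu]
    have hE : 0 < Real.exp (c * t) := Real.exp_pos _
    have h1 : (1 - t) * L * (x / L * Real.exp (c * t)) ≤
        u * (x / L * Real.exp (c * t)) :=
      mul_le_mul_of_nonneg_right hu1 (by positivity)
    have h2 : (1 - t) * L * (x / L * Real.exp (c * t)) =
        x * ((1 - t) * Real.exp (c * t)) := by
      field_simp
    nlinarith
  -- conclude by monotonicity of t * exp t
  by_contra h
  push_neg at h
  have h3 : u * Real.exp u < y * Real.exp y :=
    mul_lt_mul'' h (Real.exp_lt_exp.2 h) hu0.le (Real.exp_pos u).le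
  rw [hxy] at h3
  linarith
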